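/- arXiv:1805.11056 — 3 statements merged into one kernel-verified Lean document; each statement's English description precedes it below -/
import Mathlib

section
/- Let {a_n}_{n≥0} and {b_n}_{n≥1} be sequences of nonnegative reals satisfying a_{n+1} ≤ χ_0 a_n + χ_1 a_{n−1} + b_n for all n ≥ 1, where χ_0 ∈ R, χ_1 ≥ 0, χ_0 + χ_1 < 1, and Σ_{n≥1} b_n < +∞. Then Σ_{n≥0} a_n < +∞. -/
theorem stmt_5 (a b : ℕ → ℝ) (χ₀ χ₁ : ℝ) (hχ₁ : 0 ≤ χ₁) (hχ : χ₀ + χ₁ < 1)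
    (ha : ∀ n, 0 ≤ a n) (hb : ∀ n, 1 ≤ n → 0 ≤ b n)
    (hrec : ∀ n, 1 ≤ n → a (n + 1) ≤ χ₀ * a n + χ₁ * a (n - 1) + b n)
    (hsum : Summable b) :
    Summable a := by
  set b' : ℕ → ℝ := fun n => if n = 0 then 0 else b n with hb'
  have hb'sum : Summable b' := by
    have h1 : Summable (fun n : ℕ => if n = 0 then b 0 else 0) := summable_of_ne_finset_zero (s := {0}) (by intro n hn; simp at hn; simp [hn])
    have h2 : b' = fun n => b n - (if n = 0 then b 0 else 0) := by
      funext n; by_cases h : n = 0 <;> simp [hb', h]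
    rw [h2]; exact hsum.sub h1
  have hb'nonneg : ∀ n, 0 ≤ b' n := by
    intro n
    by_cases h : n = 0
    · simp [hb', h]
    · simpa [hb', h] using hb n (Nat.one_le_iff_ne_zero.mpr h)
  set Bb := ∑' n, b' n with hBb
  have hBb0 : 0 ≤ Bb := tsum_nonneg hb'nonneg
  set T : ℕ → ℝ := fun N => ∑ i ∈ Finset.range N, a i with hT
  have hTnonneg : ∀ N, 0 ≤ T N := fun N => Finset.sum_nonneg fun i _ => ha i
  have hTmono : Monotone T := fun m n h =>
    Finset.sum_le_sum_of_subset_of_nonneg (Finset.range_subset_range.mpr h) (fun i _ _ => ha i)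
  have key : ∀ N, T (N + 2) ≤
      a 0 + a 1 + χ₀ * (T (N + 1) - a 0) + χ₁ * T N + ∑ i ∈ Finset.range N, b (i + 1) := by
    intro N
    induction N with
    | zero => simp [hT, Finset.sum_range_succ]
    | succ n ih =>
      have h1 : T (n + 3) = T (n + 2) + a (n + 2) := by
        simp [hT, Finset.sum_range_succ]
      have h2 : a (n + 1 + 1) ≤ χ₀ * a (n + 1) + χ₁ * a (n + 1 - 1) + b (n + 1) :=
        hrec (n + 1) (by omega)
      simp only [Nat.add_sub_cancel] at h2
      have h3 : T (n + 2) = T (n + 1) + a (n + 1) := by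
        simp [hT, Finset.sum_range_succ]
      have h4 : T (n + 1) = T n + a n := by
        simp [hT, Finset.sum_range_succ]
      have h5 : ∑ i ∈ Finset.range (n + 1), b (i + 1)
          = (∑ i ∈ Finset.range n, b (i + 1)) + b (n + 1) := Finset.sum_range_succ _ _
      have h6 : a (n + 1 + 1) = a (n + 2) := by norm_num
      rw [h6] at h2
      rw [h1, h5, h3, h4]
      nlinarith [h2, ih]
  have hsumb : ∀ N, ∑ i ∈ Finset.range N, b (i + 1) ≤ Bb := by
    intro N
    have h1 : ∑ i ∈ Finset.range (N + 1), b' i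
        = (∑ i ∈ Finset.range N, b (i + 1)) + b' 0 := by
      rw [Finset.sum_range_succ']
      simp [hb']
    have h2 : ∑ i ∈ Finset.range (N + 1), b' i ≤ Bb :=
      Summable.sum_le_tsum _ (fun i _ => hb'nonneg i) hb'sum
    have h3 : b' 0 = 0 := by simp [hb']
    rw [h1, h3] at h2
    linarith
  set ρ := max (χ₀ + χ₁) 0 with hρ
  have hρ0 : 0 ≤ ρ := le_max_right _ _
  have hρ1 : ρ < 1 := max_lt hχ one_pos
  set C := a 0 + a 1 + |χ₀| * a 0 + Bb with hC
  have key2 : ∀ N, T (N + 2) * (1 - ρ) ≤ C := by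
    intro N
    have h0 := key N
    have habs : -χ₀ * a 0 ≤ |χ₀| * a 0 :=
      mul_le_mul_of_nonneg_right (neg_le_abs χ₀) (ha 0)
    have hmix : χ₀ * T (N + 1) + χ₁ * T N ≤ ρ * T (N + 2) := by
      rcases le_or_gt 0 χ₀ with h | h
      · have e1 : χ₀ * T (N + 1) ≤ χ₀ * T (N + 2) :=
          mul_le_mul_of_nonneg_left (hTmono (by omega)) h
        have e2 : χ₁ * T N ≤ χ₁ * T (N + 2) :=
          mul_le_mul_of_nonneg_left (hTmono (by omega)) hχ₁
        have e3 : (χ₀ + χ₁) * T (N + 2) ≤ ρ * T (N + 2) :=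
          mul_le_mul_of_nonneg_right (le_max_left _ _) (hTnonneg _)
        nlinarith
      · have e1 : χ₀ * T (N + 1) ≤ χ₀ * T N :=
          mul_le_mul_of_nonpos_left (hTmono (by omega)) h.le
        have e2 : (χ₀ + χ₁) * T N ≤ ρ * T N :=
          mul_le_mul_of_nonneg_right (le_max_left _ _) (hTnonneg _)
        have e3 : ρ * T N ≤ ρ * T (N + 2) :=
          mul_le_mul_of_nonneg_left (hTmono (by omega)) hρ0
        nlinarith
    have hbN := hsumb N
    nlinarith
  set M := max (C / (1 - ρ)) (a 0) with hM
  have hbound : ∀ N, T N ≤ M := by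
    intro N
    match N with
    | 0 =>
      have : T 0 = 0 := by simp [hT]
      rw [this]
      exact le_trans (ha 0) (le_max_right _ _)
    | 1 =>
      have : T 1 = a 0 := by simp [hT]
      rw [this]
      exact le_max_right _ _
    | (n + 2) =>
      have h1 : (0:ℝ) < 1 - ρ := by linarith
      have h2 : T (n + 2) ≤ C / (1 - ρ) := (le_div_iff₀ h1).mpr (key2 n)
      exact le_trans h2 (le_max_left _ _)
  exact summable_of_sum_range_le ha hbound
end

section
/- Let {e_n}_{n≥0} be a monotonically decreasing sequence of nonnegative reals converging to 0 such that e_{n−1} − e_n ≥ C_e e_n^{2θ} for all n ≥ n_0, where C_e > 0 and θ ∈ (0, 1/2]. Then there exist C > 0 and Q ∈ [0,1) such that e_n ≤ C Q^n for all n ≥ n_0. -/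
theorem stmt_13 (e : ℕ → ℝ) (he0 : ∀ n, 0 ≤ e n)
    (hmono : ∀ n, e (n + 1) ≤ e n)
    (hlim : Filter.Tendsto e Filter.atTop (nhds 0))
    (n₀ : ℕ) (hn₀ : 1 ≤ n₀) (Ce θ : ℝ) (hCe : 0 < Ce)
    (hθ : θ ∈ Set.Ioc (0 : ℝ) (1 / 2))
    (hrec : ∀ n, n₀ ≤ n → e (n - 1) - e n ≥ Ce * e n ^ (2 * θ)) :
    ∃ C : ℝ, 0 < C ∧ ∃ Q ∈ Set.Ico (0 : ℝ) 1, ∀ n, n₀ ≤ n → e n ≤ C * Q ^ n := by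
  have hanti : Antitone e := antitone_nat_of_succ_le hmono
  -- find N ≥ n₀ with e N ≤ 1
  obtain ⟨N, hNn₀, hN1⟩ : ∃ N, n₀ ≤ N ∧ e N ≤ 1 := by
    have := (Metric.tendsto_atTop.mp hlim) 1 one_pos
    obtain ⟨M, hM⟩ := this
    refine ⟨max n₀ M, le_max_left _ _, ?_⟩
    have := hM (max n₀ M) (le_max_right _ _)
    rw [Real.dist_eq, sub_zero, abs_of_nonneg (he0 _)] at this
    linarith
  set Q : ℝ := 1 / (1 + Ce) with hQ
  have hQpos : 0 < Q := by positivity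
  have hQlt : Q < 1 := by
    rw [hQ, div_lt_one (by linarith)]; linarith
  have hQNpos : (0:ℝ) < Q ^ N := pow_pos hQpos N
  -- key: e (N + k) ≤ e N * Q ^ k
  have key : ∀ k, e (N + k) ≤ e N * Q ^ k := by
    intro k
    induction k with
    | zero => simp
    | succ k ih =>
      have hn : n₀ ≤ N + (k + 1) := le_trans hNn₀ (Nat.le_add_right _ _)
      have hr := hrec (N + (k + 1)) hn
      have hsub : N + (k + 1) - 1 = N + k := by omega
      rw [hsub] at hr
      set x := e (N + (k + 1)) with hx
      have hx0 : 0 ≤ x := he0 _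
      have hx1 : x ≤ 1 := le_trans (hanti (Nat.le_add_right N (k+1))) hN1
      have hpow : x ≤ x ^ (2 * θ) := by
        rcases eq_or_lt_of_le hx0 with h0 | h0
        · rw [← h0, Real.zero_rpow (by nlinarith [hθ.1])]
        · calc x = x ^ (1:ℝ) := (Real.rpow_one x).symm
            _ ≤ x ^ (2 * θ) := Real.rpow_le_rpow_of_exponent_ge h0 hx1 (by
                have := hθ.2; linarith)
      have h1 : (1 + Ce) * x ≤ e (N + k) := by
        have : Ce * x ≤ Ce * x ^ (2 * θ) := by
          exact mul_le_mul_of_nonneg_left hpow hCe.le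
        nlinarith
      have h2 : x ≤ e (N + k) * Q := by
        rw [hQ, mul_one_div, le_div_iff₀ (by linarith : (0:ℝ) < 1 + Ce)]
        nlinarith
      calc x ≤ e (N + k) * Q := h2
        _ ≤ (e N * Q ^ k) * Q := by
            exact mul_le_mul_of_nonneg_right ih hQpos.le
        _ = e N * Q ^ (k + 1) := by ring
  have hC : 0 < (e n₀ + 1) / Q ^ N := div_pos (by linarith [he0 n₀]) hQNpos
  refine ⟨(e n₀ + 1) / Q ^ N, hC, Q, ⟨hQpos.le, hQlt⟩, ?_⟩
  intro n hn
  rcases le_or_gt n N with hle | hlt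
  · have h1 : e n ≤ e n₀ := hanti hn
    have h2 : Q ^ N ≤ Q ^ n := pow_le_pow_of_le_one hQpos.le hQlt.le hle
    calc e n ≤ e n₀ + 1 := by linarith
      _ = (e n₀ + 1) / Q ^ N * Q ^ N := by field_simp
      _ ≤ (e n₀ + 1) / Q ^ N * Q ^ n := by
          exact mul_le_mul_of_nonneg_left h2 hC.le
  · obtain ⟨k, rfl⟩ : ∃ k, n = N + k := ⟨n - N, by omega⟩
    calc e (N + k) ≤ e N * Q ^ k := key k
      _ ≤ (e n₀ + 1) * Q ^ k := by
          have : e N ≤ e n₀ + 1 := by linarith [hanti hNn₀]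
          exact mul_le_mul_of_nonneg_right this (pow_pos hQpos k).le
      _ = (e n₀ + 1) / Q ^ N * Q ^ N * Q ^ k := by field_simp
      _ = (e n₀ + 1) / Q ^ N * Q ^ (N + k) := by rw [pow_add]; ring
end

section
/- Let {e_n}_{n≥0} be a monotonically decreasing sequence of nonnegative reals converging to 0 such that e_{n−1} − e_n ≥ C_e e_n^{2θ} for all n ≥ n_0, where C_e > 0 and θ ∈ (1/2, 1). Then there exists C > 0 such that e_n ≤ C n^{−1/(2θ−1)} for all n ≥ n_0 + 1. -/
open Real

/-- Tangent-line inequality for the convex function `x ^ (-β)` on `(0, ∞)`. -/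
lemma tangent_rpow_neg {a b β : ℝ} (ha : 0 < a) (hab : a ≤ b) (hβ : 0 < β) :
    a ^ (-β) - b ^ (-β) ≤ β * a ^ (-β - 1) * (b - a) := by
  have hb : 0 < b := ha.trans_le hab
  have ht : 0 < b / a := by positivity
  have ht1 : 1 ≤ b / a := (one_le_div ha).2 hab
  have hber : 1 - β * (b / a - 1) ≤ (b / a) ^ (-β) := by
    rw [Real.rpow_def_of_pos ht]
    have h1 : Real.log (b / a) * (-β) + 1 ≤ Real.exp (Real.log (b / a) * (-β)) :=
      Real.add_one_le_exp _
    have h2 : Real.log (b / a) ≤ b / a - 1 := Real.log_le_sub_one_of_pos ht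
    nlinarith [h1, h2, hβ.le]
  have hsplit : b ^ (-β) = a ^ (-β) * (b / a) ^ (-β) := by
    rw [← Real.mul_rpow ha.le ht.le, mul_div_cancel₀ _ ha.ne']
  have hpa : (0:ℝ) < a ^ (-β) := Real.rpow_pos_of_pos ha _
  have hpa1 : a ^ (-β - 1) = a ^ (-β) / a := Real.rpow_sub_one ha.ne' _
  have key : a ^ (-β) - b ^ (-β) ≤ a ^ (-β) * (β * (b / a - 1)) := by
    rw [hsplit]
    nlinarith [mul_le_mul_of_nonneg_left hber hpa.le]
  calc a ^ (-β) - b ^ (-β) ≤ a ^ (-β) * (β * (b / a - 1)) := key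
    _ = β * a ^ (-β - 1) * (b - a) := by
        rw [hpa1]; field_simp

theorem stmt_14 (e : ℕ → ℝ) (he0 : ∀ n, 0 ≤ e n)
    (hmono : ∀ n, e (n + 1) ≤ e n)
    (hlim : Filter.Tendsto e Filter.atTop (nhds 0))
    (n₀ : ℕ) (hn₀ : 1 ≤ n₀) (Ce θ : ℝ) (hCe : 0 < Ce)
    (hθ : θ ∈ Set.Ioo (1 / 2 : ℝ) 1)
    (hrec : ∀ n, n₀ ≤ n → e (n - 1) - e n ≥ Ce * e n ^ (2 * θ)) :
    ∃ C : ℝ, 0 < C ∧ ∀ n, n₀ + 1 ≤ n → e n ≤ C * (n : ℝ) ^ (-(1 / (2 * θ - 1))) := by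
  obtain ⟨hθ1, hθ2⟩ := hθ
  have h2θ1 : 0 < 2 * θ - 1 := by linarith
  have h2θpos : 0 < 2 * θ := by linarith
  set β : ℝ := 1 / (2 * θ - 1) with hβdef
  have hβ : 0 < β := by positivity
  have hβmul : β * (2 * θ - 1) = 1 := by rw [hβdef]; field_simp
  have hβ2θ : β * (2 * θ) = β + 1 := by nlinarith [hβmul]
  set D : ℝ := (2:ℝ) ^ (β + 1) with hDdef
  have hD : 0 < D := Real.rpow_pos_of_pos two_pos _
  have hBDC : 0 < β * D / Ce := by positivity
  set A : ℝ := (β * D / Ce) ^ β with hAdef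
  have hA : 0 < A := Real.rpow_pos_of_pos hBDC _
  set K : ℝ := max (e n₀ * (n₀ : ℝ) ^ β) A with hKdef
  have hK : 0 < K := lt_of_lt_of_le hA (le_max_right _ _)
  have hKA : A ≤ K := le_max_right _ _
  -- the key constant inequality : Ce * K^(2θ-1) ≥ β * D
  have hK2 : β * D ≤ Ce * K ^ (2 * θ - 1) := by
    have h1 : A ^ (2 * θ - 1) ≤ K ^ (2 * θ - 1) :=
      Real.rpow_le_rpow hA.le hKA h2θ1.le
    have h2 : A ^ (2 * θ - 1) = β * D / Ce := by
      rw [hAdef, ← Real.rpow_mul hBDC.le, hβmul, Real.rpow_one]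
    rw [h2] at h1
    calc β * D = Ce * (β * D / Ce) := by field_simp
      _ ≤ Ce * K ^ (2 * θ - 1) := by
          exact mul_le_mul_of_nonneg_left h1 hCe.le
  -- main claim by induction
  have key : ∀ n, n₀ ≤ n → e n ≤ K * (n : ℝ) ^ (-β) := by
    intro n hn
    induction n, hn using Nat.le_induction with
    | base =>
      have hn0pos : (0:ℝ) < (n₀ : ℝ) := by exact_mod_cast hn₀
      have hp : (0:ℝ) < (n₀ : ℝ) ^ β := Real.rpow_pos_of_pos hn0pos _
      rw [Real.rpow_neg hn0pos.le, ← div_eq_mul_inv, le_div_iff₀ hp]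
      exact le_max_left _ _
    | succ n hn IH =>
      by_contra hcon
      push_neg at hcon
      have hge1 : (1:ℝ) ≤ (n : ℝ) := by
        have : 1 ≤ n := le_trans hn₀ hn
        exact_mod_cast this
      have hnpos : (0:ℝ) < (n : ℝ) := lt_of_lt_of_le one_pos hge1
      have hn1pos : (0:ℝ) < ((n:ℝ) + 1) := by linarith
      set y : ℝ := K * ((n:ℝ) + 1) ^ (-β) with hydef
      have hy : 0 < y := mul_pos hK (Real.rpow_pos_of_pos hn1pos _)
      have hcast : ((n + 1 : ℕ) : ℝ) = (n:ℝ) + 1 := by push_cast; ring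
      rw [hcast] at hcon
      -- recursion at n+1
      have hr := hrec (n + 1) (le_trans hn (Nat.le_succ n))
      rw [Nat.add_sub_cancel] at hr
      -- strict monotonicity of x + Ce x^(2θ)
      have hstep : y + Ce * y ^ (2 * θ) < e n := by
        have h1 : y ^ (2 * θ) < e (n + 1) ^ (2 * θ) :=
          Real.rpow_lt_rpow hy.le hcon h2θpos
        have h2 : Ce * y ^ (2 * θ) < Ce * e (n + 1) ^ (2 * θ) :=
          mul_lt_mul_of_pos_left h1 hCe
        nlinarith [hr, hcon]
      have hIH' : y + Ce * y ^ (2 * θ) < K * (n:ℝ) ^ (-β) := lt_of_lt_of_le hstep IH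
      -- tangent inequality : n^(-β) - (n+1)^(-β) ≤ β n^(-β-1)
      have htan : (n:ℝ) ^ (-β) - ((n:ℝ) + 1) ^ (-β) ≤ β * (n:ℝ) ^ (-β - 1) := by
        have h := tangent_rpow_neg hnpos (by linarith : (n:ℝ) ≤ (n:ℝ) + 1) hβ
        rw [add_sub_cancel_left, mul_one] at h
        exact h
      set P : ℝ := (n:ℝ) ^ (-β - 1) with hPdef
      have hP : 0 < P := Real.rpow_pos_of_pos hnpos _
      -- so Ce * y^(2θ) < K * β * P
      have hmain : Ce * y ^ (2 * θ) < K * (β * P) := by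
        have h3 : K * ((n:ℝ) ^ (-β) - ((n:ℝ) + 1) ^ (-β)) ≤ K * (β * P) :=
          mul_le_mul_of_nonneg_left htan hK.le
        nlinarith [hIH', h3]
      -- compute y ^ (2θ)
      have hycomp : y ^ (2 * θ) = K ^ (2 * θ) * ((n:ℝ) + 1) ^ (-(β + 1)) := by
        rw [hydef, Real.mul_rpow hK.le (Real.rpow_pos_of_pos hn1pos _).le,
          ← Real.rpow_mul hn1pos.le]
        congr 1
        rw [neg_mul, hβ2θ]
      -- lower bound (n+1)^(-(β+1)) ≥ D⁻¹ * P
      have hlow : D⁻¹ * P ≤ ((n:ℝ) + 1) ^ (-(β + 1)) := by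
        have h4 : ((n:ℝ) + 1) ≤ 2 * (n:ℝ) := by linarith
        have h5 : ((2:ℝ) * (n:ℝ)) ^ (-(β + 1)) ≤ ((n:ℝ) + 1) ^ (-(β + 1)) :=
          Real.rpow_le_rpow_of_nonpos hn1pos h4 (by linarith)
        have h6 : ((2:ℝ) * (n:ℝ)) ^ (-(β + 1)) = D⁻¹ * P := by
          rw [Real.mul_rpow (by norm_num) hnpos.le, hDdef,
            ← Real.rpow_neg_one ((2:ℝ) ^ (β + 1)), ← Real.rpow_mul (by norm_num)]
          congr 1
          · congr 1; ring
          · rw [hPdef]; congr 1; ring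
        rw [← h6]; exact h5
      -- combine : Ce * K^(2θ) * D⁻¹ * P < K * β * P
      have hcomb : Ce * (K ^ (2 * θ) * (D⁻¹ * P)) < K * (β * P) := by
        have h7 : Ce * (K ^ (2 * θ) * (D⁻¹ * P)) ≤ Ce * y ^ (2 * θ) := by
          rw [hycomp]
          apply mul_le_mul_of_nonneg_left _ hCe.le
          exact mul_le_mul_of_nonneg_left hlow (Real.rpow_pos_of_pos hK _).le
        exact lt_of_le_of_lt h7 hmain
      -- divide by P, rewrite K^(2θ) = K * K^(2θ-1)
      have hKsplit : K ^ (2 * θ) = K * K ^ (2 * θ - 1) := by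
        rw [← Real.rpow_one_add' hK.le (by linarith)]
        congr 1; ring
      rw [hKsplit] at hcomb
      set s : ℝ := K ^ (2 * θ - 1) with hsdef
      have hs : 0 < s := Real.rpow_pos_of_pos hK _
      have hfinal : Ce * s < β * D := by
        have e1 : (Ce * K * s * D⁻¹) * P < (K * β) * P := by
          have r1 : Ce * (K * s * (D⁻¹ * P)) = (Ce * K * s * D⁻¹) * P := by ring
          have r2 : K * (β * P) = (K * β) * P := by ring
          rw [r1, r2] at hcomb
          exact hcomb
        have e2 : Ce * K * s * D⁻¹ < K * β := (mul_lt_mul_iff_left₀ hP).1 e1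
        have e3 : Ce * s * D⁻¹ < β := by
          have r3 : Ce * K * s * D⁻¹ = K * (Ce * s * D⁻¹) := by ring
          rw [r3] at e2
          exact (mul_lt_mul_iff_right₀ hK).1 e2
        have r4 : Ce * s = (Ce * s * D⁻¹) * D := by field_simp
        rw [r4]
        exact mul_lt_mul_of_pos_right e3 hD
      linarith [hK2, hfinal]
  refine ⟨K, hK, fun n hn => ?_⟩
  have : n₀ ≤ n := le_trans (Nat.le_succ n₀) hn
  exact key n this
end
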